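/- Assume D_I = D_S. Let T > 0, and for j = 1, 2 let i_j : [0,T] → ℝ be continuous functions with 0 ≤ i_j(t) ≤ n₀, and set s_j(t) = n₀ − i_j(t). Let (Ŝ_j, Î_j) solve system (Ĉ) with data (s_j, i_j): ∂Ŝ_j/∂t = Î_j(μ − β₀Ŝ_j) − D_S(Ŝ_j − (x/m)s_j(t)), ∂Î_j/∂t = Î_j(−μ + β₀Ŝ_j) − D_I(Î_j − (x/m)i_j(t)), with the same initial data (S₀, I₀), where additionally 0 ≤ Î_j ≤ N̂_j := Ŝ_j + Î_j on J × [0,T]. Let C(x) = β₀(N(x,0) + n₀x/m) + μ + D_I with N(x,0) = S₀(x) + I₀(x), let λ > max_{x ∈ J} C(x), and define ‖f‖_λ = sup_{t ∈ [0,T]} e^{−λt}|f(t)|. Then the function y = Î₂ − Î₁ satisfies, for all (x,t) ∈ J × [0,T], |y(x,t)| ≤ D_I (x/m) ‖i₂ − i₁‖_λ (e^{λt} − e^{C(x)t})/(λ − C(x)). -/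

import Mathlib

open Real Set

/-- Derivative of `t ↦ exp (c * t)`. -/
lemma hasDerivAt_exp_const_mul (c t : ℝ) :
    HasDerivAt (fun u => Real.exp (c * u)) (c * Real.exp (c * t)) t := by
  have h := ((hasDerivAt_id t).const_mul c).exp
  simpa [mul_comm] using h

/-- Solution formula for the linear ODE `f' = -D (f - c)` on `[0, T]`. -/
lemma lin_decay {T D c : ℝ} {f : ℝ → ℝ}
    (hf : ∀ t ∈ Icc (0:ℝ) T, HasDerivAt f (-D * (f t - c)) t) :
    ∀ t ∈ Icc (0:ℝ) T, f t = c + (f 0 - c) * Real.exp (-(D * t)) := by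
  set g : ℝ → ℝ := fun t => (f t - c) * Real.exp (D * t) with hg_def
  have hg : ∀ t ∈ Icc (0:ℝ) T, HasDerivAt g 0 t := by
    intro t ht
    have h1 := ((hf t ht).sub_const c).mul (hasDerivAt_exp_const_mul D t)
    refine h1.congr_deriv ?_
    ring
  have hcont : ContinuousOn g (Icc 0 T) :=
    fun t ht => (hg t ht).continuousAt.continuousWithinAt
  have hconst := constant_of_has_deriv_right_zero hcont
    (fun t ht => (hg t (Ico_subset_Icc_self ht)).hasDerivWithinAt)
  intro t ht
  have h := hconst t ht
  have hE : Real.exp (D * t) ≠ 0 := (Real.exp_pos _).ne'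
  have h0 : g 0 = f 0 - c := by simp [hg_def]
  rw [h0] at h
  have : f t - c = (f 0 - c) * Real.exp (-(D * t)) := by
    rw [Real.exp_neg]
    field_simp
    simpa [hg_def] using h
  linarith

/-- Pointwise estimate on `y = Î₂ - Î₁` in the contraction argument (case `D_I = D_S`):
`|y(x,t)| ≤ D_I (x/m) ‖i₂ - i₁‖_λ (e^{λt} - e^{C(x)t})/(λ - C(x))`, where
`C(x) = β₀(N(x,0) + n₀ x/m) + μ + D_I` and `‖f‖_λ = sup_{t∈[0,T]} e^{-λt}|f(t)|`. -/
theorem pointwise_contraction_estimate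
    (xmax m μ β₀ DS DI : ℝ) (p : ℝ → ℝ)
    (hxmax : 0 < xmax) (hm : 0 < m) (hμ : 0 < μ) (hβ₀ : 0 < β₀)
    (hDS : 0 < DS) (hDI : 0 < DI)
    (hD : DI = DS)
    (hp_nonneg : ∀ x ∈ Icc (0:ℝ) xmax, 0 ≤ p x) (hp0 : p 0 = 0)
    (hp_int : ∫ x in (0:ℝ)..xmax, p x = 1)
    (hm_def : m = ∫ x in (0:ℝ)..xmax, x * p x)
    (T : ℝ) (hT : 0 < T)
    (S₀ I₀ : ℝ → ℝ)
    (hS₀ : ContDiff ℝ 1 S₀) (hI₀ : ContDiff ℝ 1 I₀)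
    (hS₀nonneg : ∀ x ∈ Icc (0:ℝ) xmax, 0 ≤ S₀ x)
    (hI₀nonneg : ∀ x ∈ Icc (0:ℝ) xmax, 0 ≤ I₀ x)
    (hS₀zero : S₀ 0 = 0) (hI₀zero : I₀ 0 = 0)
    (n₀ : ℝ) (hn₀pos : 0 < n₀)
    (hn₀ : n₀ = (∫ x in (0:ℝ)..xmax, S₀ x * p x) + ∫ x in (0:ℝ)..xmax, I₀ x * p x)
    (i₁ i₂ : ℝ → ℝ)
    (hi₁cont : ContinuousOn i₁ (Icc 0 T)) (hi₂cont : ContinuousOn i₂ (Icc 0 T))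
    (hi₁bd : ∀ t ∈ Icc (0:ℝ) T, 0 ≤ i₁ t ∧ i₁ t ≤ n₀)
    (hi₂bd : ∀ t ∈ Icc (0:ℝ) T, 0 ≤ i₂ t ∧ i₂ t ≤ n₀)
    (S₁ I₁ S₂ I₂ : ℝ → ℝ → ℝ)
    (hS₁eq : ∀ x ∈ Icc (0:ℝ) xmax, ∀ t ∈ Icc (0:ℝ) T,
      HasDerivAt (S₁ x) (I₁ x t * (μ - β₀ * S₁ x t) - DS * (S₁ x t - x / m * (n₀ - i₁ t))) t)
    (hI₁eq : ∀ x ∈ Icc (0:ℝ) xmax, ∀ t ∈ Icc (0:ℝ) T,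
      HasDerivAt (I₁ x) (I₁ x t * (-μ + β₀ * S₁ x t) - DI * (I₁ x t - x / m * i₁ t)) t)
    (hS₂eq : ∀ x ∈ Icc (0:ℝ) xmax, ∀ t ∈ Icc (0:ℝ) T,
      HasDerivAt (S₂ x) (I₂ x t * (μ - β₀ * S₂ x t) - DS * (S₂ x t - x / m * (n₀ - i₂ t))) t)
    (hI₂eq : ∀ x ∈ Icc (0:ℝ) xmax, ∀ t ∈ Icc (0:ℝ) T,
      HasDerivAt (I₂ x) (I₂ x t * (-μ + β₀ * S₂ x t) - DI * (I₂ x t - x / m * i₂ t)) t)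
    (hS₁init : ∀ x ∈ Icc (0:ℝ) xmax, S₁ x 0 = S₀ x)
    (hI₁init : ∀ x ∈ Icc (0:ℝ) xmax, I₁ x 0 = I₀ x)
    (hS₂init : ∀ x ∈ Icc (0:ℝ) xmax, S₂ x 0 = S₀ x)
    (hI₂init : ∀ x ∈ Icc (0:ℝ) xmax, I₂ x 0 = I₀ x)
    (hI₁bd : ∀ x ∈ Icc (0:ℝ) xmax, ∀ t ∈ Icc (0:ℝ) T,
      0 ≤ I₁ x t ∧ I₁ x t ≤ S₁ x t + I₁ x t)
    (hI₂bd : ∀ x ∈ Icc (0:ℝ) xmax, ∀ t ∈ Icc (0:ℝ) T,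
      0 ≤ I₂ x t ∧ I₂ x t ≤ S₂ x t + I₂ x t)
    (Cfn : ℝ → ℝ)
    (hCfn : ∀ x, Cfn x = β₀ * (S₀ x + I₀ x + n₀ * x / m) + μ + DI)
    (lam : ℝ) (hlam : ∀ x ∈ Icc (0:ℝ) xmax, Cfn x < lam) :
    ∀ x ∈ Icc (0:ℝ) xmax, ∀ t ∈ Icc (0:ℝ) T,
      |I₂ x t - I₁ x t| ≤
        DI * (x / m) * (⨆ τ : Icc (0:ℝ) T, Real.exp (-lam * τ) * |i₂ τ - i₁ τ|) *
          ((Real.exp (lam * t) - Real.exp (Cfn x * t)) / (lam - Cfn x)) := by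
  subst hD
  intro x hx t ht
  have hx0 : 0 ≤ x := hx.1
  have ha0 : 0 ≤ x / m := div_nonneg hx0 hm.le
  set K : ℝ := ⨆ τ : Icc (0:ℝ) T, Real.exp (-lam * τ) * |i₂ τ - i₁ τ| with hK_def
  -- boundedness of the sup family
  have hgc : ContinuousOn (fun τ => Real.exp (-lam * τ) * |i₂ τ - i₁ τ|) (Icc 0 T) := by
    apply ContinuousOn.mul
    · exact (Real.continuous_exp.comp (continuous_const.mul continuous_id)).continuousOn
    · exact (hi₂cont.sub hi₁cont).abs
  have hbdd : BddAbove (range fun τ : Icc (0:ℝ) T =>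
      Real.exp (-lam * τ) * |i₂ τ - i₁ τ|) := by
    have h1 := (isCompact_Icc.image_of_continuousOn hgc).bddAbove
    refine h1.mono ?_
    rintro _ ⟨τ, rfl⟩
    exact ⟨τ.1, τ.2, rfl⟩
  have hKle : ∀ s ∈ Icc (0:ℝ) T, |i₂ s - i₁ s| ≤ K * Real.exp (lam * s) := by
    intro s hs
    have hsup : Real.exp (-lam * s) * |i₂ s - i₁ s| ≤ K :=
      le_ciSup hbdd (⟨s, hs⟩ : Icc (0:ℝ) T)
    have h1 : Real.exp (-lam * s) * Real.exp (lam * s) = 1 := by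
      rw [← Real.exp_add]; ring_nf; exact Real.exp_zero
    have h2 : (Real.exp (-lam * s) * |i₂ s - i₁ s|) * Real.exp (lam * s) = |i₂ s - i₁ s| := by
      calc (Real.exp (-lam * s) * |i₂ s - i₁ s|) * Real.exp (lam * s)
          = |i₂ s - i₁ s| * (Real.exp (-lam * s) * Real.exp (lam * s)) := by ring
        _ = |i₂ s - i₁ s| := by rw [h1, mul_one]
    rw [← h2]
    exact mul_le_mul_of_nonneg_right hsup (Real.exp_pos _).le
  have hK0 : 0 ≤ K := by
    have h0T : (0:ℝ) ∈ Icc (0:ℝ) T := ⟨le_refl 0, hT.le⟩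
    have := le_ciSup hbdd (⟨0, h0T⟩ : Icc (0:ℝ) T)
    have hpos : 0 ≤ Real.exp (-lam * (0:ℝ)) * |i₂ 0 - i₁ 0| :=
      mul_nonneg (Real.exp_pos _).le (abs_nonneg _)
    exact hpos.trans this
  -- the total populations solve a linear ODE
  have hN₂ : ∀ s ∈ Icc (0:ℝ) T,
      HasDerivAt (fun u => S₂ x u + I₂ x u) (-DI * ((S₂ x s + I₂ x s) - x / m * n₀)) s := by
    intro s hs
    have h := (hS₂eq x hx s hs).add (hI₂eq x hx s hs)
    refine h.congr_deriv ?_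
    ring
  have hN₁ : ∀ s ∈ Icc (0:ℝ) T,
      HasDerivAt (fun u => S₁ x u + I₁ x u) (-DI * ((S₁ x s + I₁ x s) - x / m * n₀)) s := by
    intro s hs
    have h := (hS₁eq x hx s hs).add (hI₁eq x hx s hs)
    refine h.congr_deriv ?_
    ring
  have hN₂f := lin_decay hN₂
  have hN₁f := lin_decay hN₁
  have hN₂0 : S₂ x 0 + I₂ x 0 = S₀ x + I₀ x := by rw [hS₂init x hx, hI₂init x hx]
  have hN₁0 : S₁ x 0 + I₁ x 0 = S₀ x + I₀ x := by rw [hS₁init x hx, hI₁init x hx]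
  -- the two total populations coincide
  have hw : ∀ s ∈ Icc (0:ℝ) T, S₂ x s + I₂ x s = S₁ x s + I₁ x s := by
    intro s hs
    rw [hN₂f s hs, hN₁f s hs, hN₂0, hN₁0]
  -- uniform bound on total population
  have hB0 : 0 ≤ S₀ x + I₀ x := add_nonneg (hS₀nonneg x hx) (hI₀nonneg x hx)
  have hNle : ∀ s ∈ Icc (0:ℝ) T, S₂ x s + I₂ x s ≤ S₀ x + I₀ x + x / m * n₀ := by
    intro s hs
    rw [hN₂f s hs, hN₂0]
    have he1 : Real.exp (-(DI * s)) ≤ 1 := by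
      rw [Real.exp_le_one_iff]
      have : 0 ≤ DI * s := mul_nonneg hDS.le hs.1
      linarith
    have he0 : 0 < Real.exp (-(DI * s)) := Real.exp_pos _
    have hxn : 0 ≤ x / m * n₀ := mul_nonneg ha0 hn₀pos.le
    nlinarith
  -- pointwise bounds on S₂ and I₁
  have hS₂nonneg : ∀ s ∈ Icc (0:ℝ) T, 0 ≤ S₂ x s := by
    intro s hs
    have := (hI₂bd x hx s hs).2
    linarith
  have hS₂le : ∀ s ∈ Icc (0:ℝ) T, S₂ x s ≤ S₀ x + I₀ x + x / m * n₀ := by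
    intro s hs
    have h1 := (hI₂bd x hx s hs).1
    have h2 := hNle s hs
    linarith
  have hI₁nonneg : ∀ s ∈ Icc (0:ℝ) T, 0 ≤ I₁ x s := fun s hs => (hI₁bd x hx s hs).1
  have hI₁le : ∀ s ∈ Icc (0:ℝ) T, I₁ x s ≤ S₀ x + I₀ x + x / m * n₀ := by
    intro s hs
    have h1 := (hI₁bd x hx s hs).2
    have h2 : S₁ x s + I₁ x s ≤ S₀ x + I₀ x + x / m * n₀ := by
      rw [← hw s hs]; exact hNle s hs
    linarith
  -- the value of C at x
  have hC : Cfn x = β₀ * (S₀ x + I₀ x + n₀ * x / m) + μ + DI := hCfn x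
  have hBa : n₀ * x / m = x / m * n₀ := by ring
  have hC0 : 0 < Cfn x := by
    rw [hC, hBa]
    have : 0 ≤ β₀ * (S₀ x + I₀ x + x / m * n₀) :=
      mul_nonneg hβ₀.le (by nlinarith [mul_nonneg ha0 hn₀pos.le])
    linarith
  have hlamC : Cfn x < lam := hlam x hx
  have hlC : 0 < lam - Cfn x := by linarith
  -- derivative of y
  have hyd : ∀ s ∈ Icc (0:ℝ) T,
      HasDerivAt (fun u => I₂ x u - I₁ x u)
        ((-μ - DI + β₀ * (S₂ x s - I₁ x s)) * (I₂ x s - I₁ x s)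
          + DI * (x / m) * (i₂ s - i₁ s)) s := by
    intro s hs
    have h := (hI₂eq x hx s hs).sub (hI₁eq x hx s hs)
    refine h.congr_deriv ?_
    have hw' : S₂ x s + I₂ x s = S₁ x s + I₁ x s := hw s hs
    linear_combination (β₀ * I₁ x s) * hw'
  -- bound on the linear coefficient
  have hAbd : ∀ s ∈ Icc (0:ℝ) T, |(-μ - DI + β₀ * (S₂ x s - I₁ x s))| ≤ Cfn x := by
    intro s hs
    rw [abs_le, hC, hBa]
    constructor
    · nlinarith [mul_le_mul_of_nonneg_left (hI₁le s hs) hβ₀.le,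
        mul_nonneg hβ₀.le (hS₂nonneg s hs)]
    · nlinarith [mul_le_mul_of_nonneg_left (hS₂le s hs) hβ₀.le,
        mul_nonneg hβ₀.le (hI₁nonneg s hs)]
  -- continuity of y
  have hycont : ContinuousOn (fun u => I₂ x u - I₁ x u) (Icc 0 T) :=
    fun s hs => (hyd s hs).continuousAt.continuousWithinAt
  have hy0 : I₂ x 0 - I₁ x 0 = 0 := by rw [hI₂init x hx, hI₁init x hx]; ring
  -- the ε-perturbed boundary function
  have key : ∀ ε > (0:ℝ), |I₂ x t - I₁ x t| ≤
      (DI * (x / m) * K + ε) *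
        ((Real.exp (lam * t) - Real.exp (Cfn x * t)) / (lam - Cfn x)) := by
    intro ε hε
    set k : ℝ := DI * (x / m) * K + ε with hk_def
    have hk0 : 0 < k := by
      have : 0 ≤ DI * (x / m) * K := mul_nonneg (mul_nonneg hDS.le ha0) hK0
      rw [hk_def]; linarith
    set B : ℝ → ℝ :=
      fun u => k * ((Real.exp (lam * u) - Real.exp (Cfn x * u)) / (lam - Cfn x)) with hB_def
    have hBd : ∀ u, HasDerivAt B (Cfn x * B u + k * Real.exp (lam * u)) u := by
      intro u
      have h1 := ((hasDerivAt_exp_const_mul lam u).sub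
        (hasDerivAt_exp_const_mul (Cfn x) u)).div_const (lam - Cfn x)
      have h2 := h1.const_mul k
      refine HasDerivAt.congr_deriv (f := B) h2 ?_
      rw [hB_def]
      field_simp
      ring
    have hbound : ∀ s ∈ Ico (0:ℝ) T,
        ‖(fun u => I₂ x u - I₁ x u) s‖ = B s →
        ‖(-μ - DI + β₀ * (S₂ x s - I₁ x s)) * (I₂ x s - I₁ x s)
          + DI * (x / m) * (i₂ s - i₁ s)‖ < Cfn x * B s + k * Real.exp (lam * s) := by
      intro s hs htouch
      have hs' : s ∈ Icc (0:ℝ) T := Ico_subset_Icc_self hs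
      rw [Real.norm_eq_abs] at htouch ⊢
      have h1 : |(-μ - DI + β₀ * (S₂ x s - I₁ x s)) * (I₂ x s - I₁ x s)
          + DI * (x / m) * (i₂ s - i₁ s)|
          ≤ |(-μ - DI + β₀ * (S₂ x s - I₁ x s))| * |I₂ x s - I₁ x s|
            + DI * (x / m) * |i₂ s - i₁ s| := by
        calc _ ≤ |(-μ - DI + β₀ * (S₂ x s - I₁ x s)) * (I₂ x s - I₁ x s)|
              + |DI * (x / m) * (i₂ s - i₁ s)| := abs_add_le _ _
          _ = |(-μ - DI + β₀ * (S₂ x s - I₁ x s))| * |I₂ x s - I₁ x s|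
              + DI * (x / m) * |i₂ s - i₁ s| := by
                rw [abs_mul, abs_mul, abs_of_nonneg (mul_nonneg hDS.le ha0)]
      have h2 : |(-μ - DI + β₀ * (S₂ x s - I₁ x s))| * |I₂ x s - I₁ x s|
          ≤ Cfn x * B s := by
        rw [htouch]
        have hBnn : 0 ≤ B s := htouch ▸ abs_nonneg _
        exact mul_le_mul_of_nonneg_right (hAbd s hs') hBnn
      have h3 : DI * (x / m) * |i₂ s - i₁ s| ≤ DI * (x / m) * K * Real.exp (lam * s) := by
        have := hKle s hs'
        calc DI * (x / m) * |i₂ s - i₁ s| ≤ DI * (x / m) * (K * Real.exp (lam * s)) :=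
              mul_le_mul_of_nonneg_left this (mul_nonneg hDS.le ha0)
          _ = DI * (x / m) * K * Real.exp (lam * s) := by ring
      have h4 : DI * (x / m) * K * Real.exp (lam * s) < k * Real.exp (lam * s) := by
        have : DI * (x / m) * K < k := by rw [hk_def]; linarith
        exact mul_lt_mul_of_pos_right this (Real.exp_pos _)
      calc |(-μ - DI + β₀ * (S₂ x s - I₁ x s)) * (I₂ x s - I₁ x s)
            + DI * (x / m) * (i₂ s - i₁ s)|
          ≤ Cfn x * B s + DI * (x / m) * K * Real.exp (lam * s) := by linarith
        _ < Cfn x * B s + k * Real.exp (lam * s) := by linarith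
    have hmain := image_norm_le_of_norm_deriv_right_lt_deriv_boundary
      (f := fun u => I₂ x u - I₁ x u)
      (f' := fun s => (-μ - DI + β₀ * (S₂ x s - I₁ x s)) * (I₂ x s - I₁ x s)
          + DI * (x / m) * (i₂ s - i₁ s))
      (a := 0) (b := T)
      hycont
      (fun s hs => (hyd s (Ico_subset_Icc_self hs)).hasDerivWithinAt)
      (B := B) (B' := fun u => Cfn x * B u + k * Real.exp (lam * u))
      (by simp [hy0, hB_def])
      hBd
      hbound
    have hres := hmain ht
    rw [Real.norm_eq_abs] at hres
    simpa [hB_def] using hres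
  -- pass to the limit ε → 0
  have hQ0 : 0 ≤ (Real.exp (lam * t) - Real.exp (Cfn x * t)) / (lam - Cfn x) := by
    apply div_nonneg _ hlC.le
    have : Cfn x * t ≤ lam * t := mul_le_mul_of_nonneg_right hlamC.le ht.1
    have := Real.exp_le_exp.2 this
    linarith
  by_contra hcon
  push_neg at hcon
  set Q : ℝ := (Real.exp (lam * t) - Real.exp (Cfn x * t)) / (lam - Cfn x) with hQ_def
  clear_value Q
  rcases eq_or_lt_of_le hQ0 with hQz | hQpos
  · have h := key 1 one_pos
    rw [← hQz, mul_zero] at h hcon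
    have h1 : |I₂ x t - I₁ x t| = 0 :=
      le_antisymm h (abs_nonneg _)
    rw [h1] at hcon
    exact absurd hcon (lt_irrefl 0)
  · set d : ℝ := |I₂ x t - I₁ x t| - DI * (x / m) * K * Q with hd_def
    clear_value d
    have hd0 : 0 < d := by rw [hd_def]; linarith
    have hε : 0 < d / (2 * Q) := div_pos hd0 (by linarith)
    have h := key (d / (2 * Q)) hε
    have hQne : Q ≠ 0 := hQpos.ne'
    have h5 : d / (2 * Q) * Q = d / 2 := by
      rw [div_mul_eq_mul_div, mul_comm d Q, mul_comm (2:ℝ) Q,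
        mul_div_mul_left d 2 hQne]
    have hexp : (DI * (x / m) * K + d / (2 * Q)) * Q
        = DI * (x / m) * K * Q + d / 2 := by
      rw [add_mul, h5]
    rw [hexp] at h
    rw [hd_def] at h
    linarith
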